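/- Fix j ∈ [m]. The set of pairs {(x, x ⊕ e_j) : x_j = 0} forms a perfect matching of {0,1}^m into 2^{m-1} pairs, and for each such pair (x, y) with y = x ⊕ e_j, we have val(x) < val(y) but g_j(x) > g_j(y), i.e., every such pair is a violation of monotonicity for g_j. -/

import Mathlib

def val {m : ℕ} (x : Fin m → Bool) : ℕ := ∑ i, if x i then 2 ^ (i : ℕ) else 0

/-- `g j x = 2·val x − 2·2^j − 1` if `x j = 1`, else `2·val x` (here coordinate `j` is
0-indexed with bit weight `2^j`, so twice the weight is `2^(j+1)`). -/
def g {m : ℕ} (j : Fin m) (x : Fin m → Bool) : ℤ :=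
  if x j then 2 * (val x : ℤ) - 2 ^ ((j : ℕ) + 1) - 1 else 2 * (val x : ℤ)

lemma val_update {m : ℕ} (j : Fin m) (x : Fin m → Bool) (h : x j = false) :
    val (Function.update x j true) = val x + 2 ^ (j : ℕ) := by
  have hfun : (fun i => if Function.update x j true i then 2 ^ (i : ℕ) else 0) =
      Function.update (fun i => if x i then (2:ℕ) ^ (i : ℕ) else 0) j (2 ^ (j : ℕ)) := by
    funext i
    by_cases hi : i = j
    · subst hi; simp
    · simp [Function.update_of_ne hi]
  have hx : val x = ∑ i ∈ Finset.univ \ {j}, (if x i then (2:ℕ) ^ (i : ℕ) else 0) := by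
    rw [val, ← Finset.sum_subset (Finset.sdiff_subset)]
    intro i _ hi
    simp only [Finset.mem_sdiff, Finset.mem_univ, true_and, Finset.mem_singleton,
      not_not] at hi
    subst hi; simp [h]
  rw [val, hfun, Finset.sum_update_of_mem (Finset.mem_univ j), ← hx]
  omega

/-- The pairs `(x, x ⊕ e_j)` over `x` with `x j = 0` form a perfect matching of
`{0,1}^m` into `2^(m-1)` pairs, each a monotonicity violation for `g j`. -/
theorem stmt7 {m : ℕ} (j : Fin m) :
    (Finset.univ.filter fun x : Fin m → Bool => x j = false).card = 2 ^ (m - 1) ∧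
    (∀ y : Fin m → Bool, y j = true →
      ∃! x : Fin m → Bool, x j = false ∧ y = Function.update x j true) ∧
    (∀ x : Fin m → Bool, x j = false →
      val x < val (Function.update x j true) ∧
      g j (Function.update x j true) < g j x) := by
  have hm : 1 ≤ m := j.pos
  refine ⟨?_, ?_, ?_⟩
  · have hb : (Finset.univ.filter fun x : Fin m → Bool => x j = false).card =
        (Finset.univ.filter fun x : Fin m → Bool => x j = true).card := by
      refine Finset.card_bij' (fun x _ => Function.update x j true)
        (fun x _ => Function.update x j false) ?_ ?_ ?_ ?_
      · intro x hx; simp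
      · intro x hx; simp
      · intro x hx
        simp only [Finset.mem_filter, Finset.mem_univ, true_and] at hx
        funext i
        by_cases hi : i = j
        · subst hi; simp [hx]
        · simp [Function.update_of_ne hi]
      · intro x hx
        simp only [Finset.mem_filter, Finset.mem_univ, true_and] at hx
        funext i
        by_cases hi : i = j
        · subst hi; simp [hx]
        · simp [Function.update_of_ne hi]
    have hsum : (Finset.univ.filter fun x : Fin m → Bool => x j = false).card +
        (Finset.univ.filter fun x : Fin m → Bool => x j = true).card = 2 ^ m := by
      have hdisj : Disjoint (Finset.univ.filter fun x : Fin m → Bool => x j = false)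
          (Finset.univ.filter fun x : Fin m → Bool => x j = true) := by
        rw [Finset.disjoint_filter]
        intro x _ h1
        simp [h1]
      have hunion : (Finset.univ.filter fun x : Fin m → Bool => x j = false) ∪
          (Finset.univ.filter fun x : Fin m → Bool => x j = true) = Finset.univ := by
        ext x
        by_cases h : x j <;> simp [h]
      rw [← Finset.card_union_of_disjoint hdisj, hunion, Finset.card_univ]
      simp
    have h2 : 2 ^ m = 2 * 2 ^ (m - 1) := by
      obtain ⟨n, rfl⟩ : ∃ n, m = n + 1 := ⟨m - 1, (Nat.succ_pred_eq_of_pos hm).symm⟩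
      rw [Nat.add_sub_cancel, pow_succ, Nat.mul_comm]
    have h3 : 2 * (Finset.univ.filter fun x : Fin m → Bool => x j = false).card =
        2 * 2 ^ (m - 1) := by
      rw [two_mul]
      nth_rewrite 2 [hb]
      rw [hsum]
      exact h2
    exact Nat.eq_of_mul_eq_mul_left (by norm_num) h3
  · intro y hy
    refine ⟨Function.update y j false, ⟨by simp, ?_⟩, ?_⟩
    · funext i
      by_cases hi : i = j
      · subst hi; simp [hy]
      · simp [Function.update_of_ne hi]
    · rintro x ⟨hx, rfl⟩
      funext i
      by_cases hi : i = j
      · subst hi; simp [hx]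
      · simp [Function.update_of_ne hi]
  · intro x hx
    have hv := val_update j x hx
    constructor
    · have hp : 0 < 2 ^ (j : ℕ) := by positivity
      omega
    · simp only [g, hx, Function.update_self, if_true, if_false, hv]
      have hp : (0:ℤ) < 2 ^ (j:ℕ) := by positivity
      push_cast
      rw [pow_succ]
      linarith
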